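/- Let P be a row-finite or column-finite infinite matrix with entries in a partially ordered commutative ring. If P is totally positive of order r, then the infinite Hankel matrix ((P^{n+n'})_{00})_{n,n'≥0} is totally positive of order r. -/

import Mathlib

/-- Row-finite infinite matrices: each row is a finitely supported function. -/
def RFMat (R : Type*) [Zero R] := ℕ → (ℕ →₀ R)

namespace RFMat

variable {R : Type*} [CommRing R]

/-- Matrix product of row-finite matrices: `(P*Q)_{ik} = ∑_j P_{ij} Q_{jk}`. -/
noncomputable def mul (P Q : RFMat R) : RFMat R :=
  fun i => (P i).sum fun j a => a • Q j

/-- The identity matrix. -/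
noncomputable def one : RFMat R := fun i => Finsupp.single i 1

/-- Matrix power `P^n`. -/
noncomputable def pow (P : RFMat R) : ℕ → RFMat R
  | 0 => one
  | n + 1 => mul (pow P n) P

end RFMat

/-- Total positivity of order `r` of a matrix given by an entry function:
all minors of size `≤ r` are nonnegative. -/
def TPordFun {R : Type*} [CommRing R] [PartialOrder R] [IsOrderedRing R] (r : ℕ) (A : ℕ → ℕ → R) : Prop :=
  ∀ m : ℕ, m ≤ r → ∀ (rr cc : Fin m → ℕ), StrictMono rr → StrictMono cc →
    0 ≤ Matrix.det (Matrix.of fun p q : Fin m => A (rr p) (cc q))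

namespace TPaux

open RFMat

variable {R : Type*} [CommRing R]

/-- Row vector times a row-finite matrix. -/
noncomputable def app (v : ℕ →₀ R) (Q : RFMat R) : ℕ →₀ R := v.sum fun i a => a • Q i

lemma app_eq (v : ℕ →₀ R) (Q : RFMat R) :
    app v Q = Finsupp.linearCombination R Q v := by
  exact (Finsupp.linearCombination_apply (l := v)).symm

lemma mul_apply (P Q : RFMat R) (i : ℕ) : mul P Q i = app (P i) Q := rfl

lemma app_one (v : ℕ →₀ R) : app v (one : RFMat R) = v := by
  unfold app one
  have : ∀ i : ℕ, ∀ a : R, a • Finsupp.single i (1 : R) = Finsupp.single i a := by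
    intro i a; rw [Finsupp.smul_single', mul_one]
  simp_rw [this]
  exact Finsupp.sum_single v

lemma app_app (v : ℕ →₀ R) (P Q : RFMat R) : app (app v P) Q = app v (mul P Q) := by
  induction v using Finsupp.induction_linear with
  | zero => simp [app_eq]
  | add f g hf hg => simp only [app_eq] at hf hg ⊢; rw [map_add, map_add, map_add, hf, hg]
  | single i a =>
      simp only [app_eq, Finsupp.linearCombination_single, map_smul]
      erw [Finsupp.linearCombination_single, Finsupp.linearCombination_single, map_smul]
      rw [mul_apply, app_eq]

lemma mul_assoc' (X Y Z : RFMat R) : mul (mul X Y) Z = mul X (mul Y Z) := by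
  funext i
  rw [mul_apply, mul_apply, mul_apply, app_app]

lemma pow_add (P : RFMat R) (a b : ℕ) : pow P (a + b) = mul (pow P a) (pow P b) := by
  induction b with
  | zero => funext i; show pow P a i = app (pow P a i) one; rw [app_one]
  | succ b ih =>
      show pow P ((a + b) + 1) = _
      show mul (pow P (a+b)) P = _
      rw [ih, mul_assoc']
      rfl

lemma pow_one' (P : RFMat R) : pow P 1 = P := by
  funext i
  show mul one P i = P i
  rw [mul_apply]
  show (Finsupp.single i (1:R)).sum (fun j a => a • P j) = P i
  rw [Finsupp.sum_single_index (by simp)]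
  simp

lemma pow_succ_left (P : RFMat R) (k : ℕ) : pow P (k + 1) = mul P (pow P k) := by
  rw [Nat.add_comm, pow_add, pow_one']

lemma app_entry (v : ℕ →₀ R) (Q : RFMat R) (T : Finset ℕ) (hT : v.support ⊆ T) (k : ℕ) :
    app v Q k = ∑ j ∈ T, v j * Q j k := by
  unfold app
  rw [Finsupp.sum_apply]
  rw [Finsupp.sum]
  simp only [Finsupp.smul_apply, smul_eq_mul]
  exact Finset.sum_subset hT (by intro j _ hj; rw [Finsupp.notMem_support_iff.mp hj, zero_mul])

lemma pow_succ_entry (P : RFMat R) (k i j : ℕ) (T : Finset ℕ) (hT : (pow P k i).support ⊆ T) :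
    pow P (k + 1) i j = ∑ l ∈ T, pow P k i l * P l j := by
  show mul (pow P k) P i j = _
  rw [mul_apply, app_entry _ _ T hT]

lemma pow_succ_entry' (P : RFMat R) (k i j : ℕ) (T : Finset ℕ) (hT : (P i).support ⊆ T) :
    pow P (k + 1) i j = ∑ l ∈ T, P i l * pow P k l j := by
  rw [pow_succ_left, mul_apply, app_entry _ _ T hT]

lemma pow_add_entry (P : RFMat R) (a b i j : ℕ) (T : Finset ℕ) (hT : (pow P a i).support ⊆ T) :
    pow P (a + b) i j = ∑ l ∈ T, pow P a i l * pow P b l j := by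
  rw [pow_add, mul_apply, app_entry _ _ T hT]





lemma card_img {m : ℕ} {f : Fin m → ℕ} (hf : Function.Injective f) :
    (Finset.image f Finset.univ).card = m := by
  rw [Finset.card_image_of_injective _ hf, Finset.card_univ, Fintype.card_fin]

/-- The increasing rearrangement of an injective tuple. -/
noncomputable def sortOf {m : ℕ} (f : Fin m → ℕ) (hf : Function.Injective f) : Fin m → ℕ :=
  (Finset.image f Finset.univ).orderEmbOfFin (card_img hf)

/-- The permutation relating a tuple to its increasing rearrangement. -/
noncomputable def permOf {m : ℕ} (f : Fin m → ℕ) (hf : Function.Injective f) :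
    Equiv.Perm (Fin m) :=
  Equiv.ofBijective
    (fun p => ((Finset.image f Finset.univ).orderIsoOfFin (card_img hf)).symm
      ⟨f p, Finset.mem_image_of_mem f (Finset.mem_univ p)⟩)
    ((Finite.injective_iff_bijective).mp (fun p q h => by
      have := congrArg (fun z => (((Finset.image f Finset.univ).orderIsoOfFin (card_img hf)) z : ℕ)) h
      simp only [OrderIso.apply_symm_apply] at this
      exact hf this))

lemma sortOf_permOf {m : ℕ} (f : Fin m → ℕ) (hf : Function.Injective f) (p : Fin m) :
    sortOf f hf (permOf f hf p) = f p := by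
  unfold sortOf permOf
  simp only [Equiv.ofBijective_apply]
  rw [← Finset.coe_orderIsoOfFin_apply, OrderIso.apply_symm_apply]

lemma sortOf_strictMono {m : ℕ} (f : Fin m → ℕ) (hf : Function.Injective f) :
    StrictMono (sortOf f hf) := (Finset.orderEmbOfFin _ _).strictMono

lemma sortOf_mem {m : ℕ} (f : Fin m → ℕ) (hf : Function.Injective f) (l : Fin m) :
    sortOf f hf l ∈ Finset.image f Finset.univ :=
  Finset.orderEmbOfFin_mem _ _ _

lemma sortOf_comp {m : ℕ} {g : Fin m → ℕ} (hg : StrictMono g) (σ : Equiv.Perm (Fin m))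
    (hinj : Function.Injective (g ∘ σ)) : sortOf (g ∘ σ) hinj = g := by
  refine (Finset.orderEmbOfFin_unique (card_img hinj) (fun l => ?_) hg).symm
  exact Finset.mem_image.mpr ⟨σ.symm l, Finset.mem_univ _, by simp⟩

lemma permOf_comp {m : ℕ} {g : Fin m → ℕ} (hg : StrictMono g) (σ : Equiv.Perm (Fin m))
    (hinj : Function.Injective (g ∘ σ)) : permOf (g ∘ σ) hinj = σ := by
  apply Equiv.ext; intro p
  apply hg.injective
  have h1 := sortOf_permOf (g ∘ σ) hinj p
  rwa [sortOf_comp hg σ hinj] at h1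

open scoped Classical in
/-- Sum over injective tuples = sum over (strictly monotone tuple, permutation) pairs. -/
lemma sum_filter_injective {M : Type*} [AddCommMonoid M] {m : ℕ} (T : Finset ℕ)
    (F : (Fin m → ℕ) → M) :
    ∑ f ∈ (Fintype.piFinset fun _ : Fin m => T).filter (fun f => Function.Injective f), F f
      = ∑ g ∈ (Fintype.piFinset fun _ : Fin m => T).filter (fun g => StrictMono g),
          ∑ σ : Equiv.Perm (Fin m), F (g ∘ σ) := by
  rw [← Finset.sum_product']
  refine (Finset.sum_bij' (fun x _ => x.1 ∘ x.2)
    (fun f hf => (sortOf f (Finset.mem_filter.mp hf).2, permOf f (Finset.mem_filter.mp hf).2))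
    ?hi ?hj ?left ?right ?val).symm
  case hi =>
    rintro ⟨g, σ⟩ hx
    simp only [Finset.mem_product, Finset.mem_filter, Fintype.mem_piFinset] at hx
    simp only [Finset.mem_filter, Fintype.mem_piFinset]
    exact ⟨fun p => hx.1.1 _, (hx.1.2.injective).comp σ.injective⟩
  case hj =>
    intro f hf
    have hf' := (Finset.mem_filter.mp hf).2
    have hf0 : ∀ p, f p ∈ T := fun p => (Fintype.mem_piFinset.mp (Finset.mem_filter.mp hf).1) p
    simp only [Finset.mem_product, Finset.mem_filter, Fintype.mem_piFinset, Finset.mem_univ,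
      and_true]
    refine ⟨fun l => ?_, sortOf_strictMono f hf'⟩
    obtain ⟨p, _, hp⟩ := Finset.mem_image.mp (sortOf_mem f hf' l)
    exact hp ▸ hf0 p
  case left =>
    rintro ⟨g, σ⟩ hx
    simp only [Finset.mem_product, Finset.mem_filter, Fintype.mem_piFinset] at hx
    have hinj : Function.Injective (g ∘ σ) := (hx.1.2.injective).comp σ.injective
    exact Prod.ext (sortOf_comp hx.1.2 σ hinj) (permOf_comp hx.1.2 σ hinj)
  case right =>
    intro f hf
    funext p
    exact sortOf_permOf f (Finset.mem_filter.mp hf).2 p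
  case val =>
    rintro ⟨g, σ⟩ _
    rfl



open scoped Classical in
/-- Cauchy–Binet. -/
lemma det_sum_mul {m : ℕ} (T : Finset ℕ) (A : Fin m → ℕ → R) (B : ℕ → Fin m → R) :
    (Matrix.of fun p q : Fin m => ∑ j ∈ T, A p j * B j q).det =
      ∑ g ∈ (Fintype.piFinset fun _ : Fin m => T).filter (fun g => StrictMono g),
        (Matrix.of fun p l : Fin m => A p (g l)).det *
          (Matrix.of fun l q : Fin m => B (g l) q).det := by
  have h1 : (Matrix.of fun p q : Fin m => ∑ j ∈ T, A p j * B j q).det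
      = ∑ f ∈ Fintype.piFinset (fun _ : Fin m => T),
          (∏ p, A p (f p)) * (Matrix.of fun p q : Fin m => B (f p) q).det := by
    have e1 : (Matrix.of fun p q : Fin m => ∑ j ∈ T, A p j * B j q)
        = fun p => ∑ j ∈ T, A p j • (fun q => B j q) := by
      funext p q
      simp only [Matrix.of_apply, Finset.sum_apply, Pi.smul_apply, smul_eq_mul]
    show Matrix.detRowAlternating _ = _
    rw [e1]
    have h2 := Matrix.detRowAlternating.toMultilinearMap.map_sum_finset
      (fun (p : Fin m) (j : ℕ) => A p j • (fun q => B j q)) (fun _ => T)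
    simp only [AlternatingMap.coe_multilinearMap] at h2
    rw [h2]
    refine Finset.sum_congr rfl fun f _ => ?_
    have h3 := Matrix.detRowAlternating.toMultilinearMap.map_smul_univ
      (fun p => A p (f p)) (fun p q => B (f p) q)
    simp only [AlternatingMap.coe_multilinearMap] at h3
    rw [h3, smul_eq_mul]
    rfl
  rw [h1]
  rw [← Finset.sum_filter_of_ne (p := fun f : Fin m → ℕ => Function.Injective f)
    (by
      intro f _ hne
      by_contra hninj
      apply hne
      rw [Function.not_injective_iff] at hninj
      obtain ⟨i, j, hij, hne'⟩ := hninj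
      rw [Matrix.det_zero_of_row_eq hne' (by funext q; simp [hij]), mul_zero])]
  rw [sum_filter_injective T
    (fun f => (∏ p, A p (f p)) * (Matrix.of fun p q : Fin m => B (f p) q).det)]
  refine Finset.sum_congr rfl fun g hg => ?_
  have hdetp : ∀ σ : Equiv.Perm (Fin m),
      (Matrix.of fun p q : Fin m => B (g (σ p)) q).det
        = (Equiv.Perm.sign σ : ℤ) * (Matrix.of fun l q : Fin m => B (g l) q).det := by
    intro σ
    have := Matrix.det_permute σ (Matrix.of fun l q : Fin m => B (g l) q)
    exact this
  calc ∑ σ : Equiv.Perm (Fin m),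
        (∏ p, A p ((g ∘ σ) p)) * (Matrix.of fun p q : Fin m => B ((g ∘ σ) p) q).det
      = (∑ σ : Equiv.Perm (Fin m), ((Equiv.Perm.sign σ : ℤ) : R) * ∏ p, A p (g (σ p))) *
          (Matrix.of fun l q : Fin m => B (g l) q).det := by
        rw [Finset.sum_mul]
        refine Finset.sum_congr rfl fun σ _ => ?_
        simp only [Function.comp_apply]
        rw [hdetp σ]
        ring
    _ = (Matrix.of fun p l : Fin m => A p (g l)).det *
          (Matrix.of fun l q : Fin m => B (g l) q).det := by
        congr 1
        rw [← Matrix.det_transpose (Matrix.of fun p l : Fin m => A p (g l))]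
        rw [Matrix.det_apply']
        rfl



end TPaux

section Positivity

open RFMat Finset

variable {R : Type*} [CommRing R] [PartialOrder R] [IsOrderedRing R] {r : ℕ} {P : RFMat R}

lemma row_nonneg (hP : TPordFun r fun i j => P i j) :
    ∀ N m, m ≤ r → ∀ n c : Fin m → ℕ, StrictMono n → StrictMono c →
      (∑ p, n p) + m ≤ N →
      0 ≤ (Matrix.of fun p q : Fin m => pow P (n p) 0 (c q)).det := by
  intro N
  induction N with
  | zero =>
      intro m hm n c hn hc hN
      have hm0 : m = 0 := by omega
      subst hm0
      simp [Matrix.det_fin_zero]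
  | succ N ih =>
      intro m hm n c hn hc hN
      cases m with
      | zero => simp [Matrix.det_fin_zero]
      | succ m' =>
        by_cases h0 : n 0 = 0
        · have hA0 : ∀ q : Fin (m' + 1),
              (Matrix.of fun p q : Fin (m' + 1) => pow P (n p) 0 (c q)) 0 q
                = if 0 = c q then (1 : R) else 0 := by
            intro q
            rw [Matrix.of_apply, h0]
            show (Finsupp.single 0 (1 : R)) (c q) = _
            rw [Finsupp.single_apply]
          by_cases hc0 : c 0 = 0
          · rw [Matrix.det_succ_row_zero, Fin.sum_univ_succ]
            have hzero : ∀ q : Fin m',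
                (-1 : R) ^ ((q.succ : Fin (m' + 1)) : ℕ) *
                  (Matrix.of fun p q : Fin (m' + 1) => pow P (n p) 0 (c q)) 0 q.succ *
                  ((Matrix.of fun p q : Fin (m' + 1) =>
                    pow P (n p) 0 (c q)).submatrix Fin.succ q.succ.succAbove).det = 0 := by
              intro q
              have hcq : c q.succ ≠ 0 := by
                have := hc (show (0 : Fin (m' + 1)) < q.succ from Fin.succ_pos q)
                omega
              rw [hA0 q.succ, if_neg (by omega), mul_zero, zero_mul]
            rw [Finset.sum_congr rfl (fun q _ => hzero q), Finset.sum_const_zero, add_zero]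
            rw [hA0 0, if_pos (by omega)]
            simp only [Fin.val_zero, pow_zero, one_mul, mul_one]
            rw [Fin.succAbove_zero]
            have : ((Matrix.of fun p q : Fin (m' + 1) =>
                pow P (n p) 0 (c q)).submatrix Fin.succ Fin.succ)
                = Matrix.of fun p q : Fin m' => pow P (n p.succ) 0 (c q.succ) := rfl
            rw [this]
            refine ih m' (by omega) _ _ (hn.comp Fin.strictMono_succ)
              (hc.comp Fin.strictMono_succ) ?_
            have hsum : ∑ p : Fin (m' + 1), n p = n 0 + ∑ p : Fin m', n p.succ :=
              Fin.sum_univ_succ n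
            omega
          · rw [Matrix.det_eq_zero_of_row_eq_zero 0 (fun q => by
              rw [hA0 q]
              have : c 0 ≤ c q := hc.monotone (Fin.zero_le q)
              rw [if_neg (by omega)])]
        · have hpos : ∀ p : Fin (m' + 1), 1 ≤ n p := by
            intro p
            have := hn.monotone (Fin.zero_le p)
            omega
          set T : Finset ℕ :=
            Finset.univ.biUnion (fun p : Fin (m' + 1) => (pow P (n p - 1) 0).support) with hT
          have hentry : ∀ p q : Fin (m' + 1),
              pow P (n p) 0 (c q) = ∑ j ∈ T, pow P (n p - 1) 0 j * P j (c q) := by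
            intro p q
            have hnp : n p = (n p - 1) + 1 := by have := hpos p; omega
            conv_lhs => rw [hnp]
            exact TPaux.pow_succ_entry P (n p - 1) 0 (c q) T
              (fun x hx => Finset.mem_biUnion.mpr ⟨p, Finset.mem_univ p, hx⟩)
          have hmat : (Matrix.of fun p q : Fin (m' + 1) => pow P (n p) 0 (c q))
              = Matrix.of fun p q : Fin (m' + 1) =>
                  ∑ j ∈ T, pow P (n p - 1) 0 j * P j (c q) := by
            funext p q
            exact hentry p q
          rw [hmat, TPaux.det_sum_mul]
          apply Finset.sum_nonneg
          intro g hg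
          have hgm : StrictMono g := (Finset.mem_filter.mp hg).2
          apply mul_nonneg
          · refine ih (m' + 1) hm (fun p => n p - 1) g ?_ hgm ?_
            · intro p p' hpp'
              show n p - 1 < n p' - 1
              have h1 := hn hpp'
              have h2 := hpos p
              omega
            · have hsum : ∑ p : Fin (m' + 1), n p
                  = (∑ p : Fin (m' + 1), (n p - 1)) + (m' + 1) := by
                have : ∑ p : Fin (m' + 1), n p = ∑ p : Fin (m' + 1), ((n p - 1) + 1) :=
                  Finset.sum_congr rfl (fun p _ => by have := hpos p; omega)
                rw [this, Finset.sum_add_distrib]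
                simp
              show (∑ p : Fin (m' + 1), (n p - 1)) + (m' + 1) ≤ N
              omega
          · exact hP (m' + 1) hm g c hgm hc

lemma col_nonneg (hP : TPordFun r fun i j => P i j) :
    ∀ N m, m ≤ r → ∀ jj nn : Fin m → ℕ, StrictMono jj → StrictMono nn →
      (∑ q, nn q) + m ≤ N →
      0 ≤ (Matrix.of fun l q : Fin m => pow P (nn q) (jj l) 0).det := by
  intro N
  induction N with
  | zero =>
      intro m hm jj nn hjj hnn hN
      have hm0 : m = 0 := by omega
      subst hm0
      simp [Matrix.det_fin_zero]
  | succ N ih =>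
      intro m hm jj nn hjj hnn hN
      cases m with
      | zero => simp [Matrix.det_fin_zero]
      | succ m' =>
        by_cases h0 : nn 0 = 0
        · have hA0 : ∀ l : Fin (m' + 1),
              (Matrix.of fun l q : Fin (m' + 1) => pow P (nn q) (jj l) 0) l 0
                = if jj l = 0 then (1 : R) else 0 := by
            intro l
            rw [Matrix.of_apply, h0]
            show (Finsupp.single (jj l) (1 : R)) 0 = _
            rw [Finsupp.single_apply]
          by_cases hj0 : jj 0 = 0
          · rw [Matrix.det_succ_column_zero, Fin.sum_univ_succ]
            have hzero : ∀ l : Fin m',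
                (-1 : R) ^ ((l.succ : Fin (m' + 1)) : ℕ) *
                  (Matrix.of fun l q : Fin (m' + 1) => pow P (nn q) (jj l) 0) l.succ 0 *
                  ((Matrix.of fun l q : Fin (m' + 1) =>
                    pow P (nn q) (jj l) 0).submatrix l.succ.succAbove Fin.succ).det = 0 := by
              intro l
              have hjl : jj l.succ ≠ 0 := by
                have := hjj (show (0 : Fin (m' + 1)) < l.succ from Fin.succ_pos l)
                omega
              rw [hA0 l.succ, if_neg hjl, mul_zero, zero_mul]
            rw [Finset.sum_congr rfl (fun l _ => hzero l), Finset.sum_const_zero, add_zero]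
            rw [hA0 0, if_pos hj0]
            simp only [Fin.val_zero, pow_zero, one_mul, mul_one]
            rw [Fin.succAbove_zero]
            have : ((Matrix.of fun l q : Fin (m' + 1) =>
                pow P (nn q) (jj l) 0).submatrix Fin.succ Fin.succ)
                = Matrix.of fun l q : Fin m' => pow P (nn q.succ) (jj l.succ) 0 := rfl
            rw [this]
            refine ih m' (by omega) _ _ (hjj.comp Fin.strictMono_succ)
              (hnn.comp Fin.strictMono_succ) ?_
            have hsum : ∑ q : Fin (m' + 1), nn q = nn 0 + ∑ q : Fin m', nn q.succ :=
              Fin.sum_univ_succ nn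
            omega
          · rw [Matrix.det_eq_zero_of_column_eq_zero 0 (fun l => by
              rw [hA0 l]
              have : jj 0 ≤ jj l := hjj.monotone (Fin.zero_le l)
              rw [if_neg (by omega)])]
        · have hpos : ∀ q : Fin (m' + 1), 1 ≤ nn q := by
            intro q
            have := hnn.monotone (Fin.zero_le q)
            omega
          set T : Finset ℕ :=
            Finset.univ.biUnion (fun l : Fin (m' + 1) => (P (jj l)).support) with hT
          have hentry : ∀ l q : Fin (m' + 1),
              pow P (nn q) (jj l) 0 = ∑ i ∈ T, P (jj l) i * pow P (nn q - 1) i 0 := by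
            intro l q
            have hnq : nn q = (nn q - 1) + 1 := by have := hpos q; omega
            conv_lhs => rw [hnq]
            exact TPaux.pow_succ_entry' P (nn q - 1) (jj l) 0 T
              (fun x hx => Finset.mem_biUnion.mpr ⟨l, Finset.mem_univ l, hx⟩)
          have hmat : (Matrix.of fun l q : Fin (m' + 1) => pow P (nn q) (jj l) 0)
              = Matrix.of fun l q : Fin (m' + 1) =>
                  ∑ i ∈ T, P (jj l) i * pow P (nn q - 1) i 0 := by
            funext l q
            exact hentry l q
          rw [hmat, TPaux.det_sum_mul]
          apply Finset.sum_nonneg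
          intro g hg
          have hgm : StrictMono g := (Finset.mem_filter.mp hg).2
          apply mul_nonneg
          · exact hP (m' + 1) hm jj g hjj hgm
          · refine ih (m' + 1) hm g (fun q => nn q - 1) hgm ?_ ?_
            · intro q q' hqq'
              show nn q - 1 < nn q' - 1
              have h1 := hnn hqq'
              have h2 := hpos q
              omega
            · have hsum : ∑ q : Fin (m' + 1), nn q
                  = (∑ q : Fin (m' + 1), (nn q - 1)) + (m' + 1) := by
                have : ∑ q : Fin (m' + 1), nn q = ∑ q : Fin (m' + 1), ((nn q - 1) + 1) :=
                  Finset.sum_congr rfl (fun q _ => by have := hpos q; omega)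
                rw [this, Finset.sum_add_distrib]
                simp
              show (∑ q : Fin (m' + 1), (nn q - 1)) + (m' + 1) ≤ N
              omega

end Positivity

theorem hankel_totally_positive {R : Type*} [CommRing R] [PartialOrder R] [IsOrderedRing R]
    (r : ℕ) (P : RFMat R) (hP : TPordFun r fun i j => P i j) :
    TPordFun r fun n n' => RFMat.pow P (n + n') 0 0 := by
  intro m hm rr cc hrr hcc
  classical
  set T : Finset ℕ :=
    Finset.univ.biUnion (fun p : Fin m => (RFMat.pow P (rr p) 0).support) with hT
  have hentry : ∀ p q : Fin m,
      RFMat.pow P (rr p + cc q) 0 0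
        = ∑ j ∈ T, RFMat.pow P (rr p) 0 j * RFMat.pow P (cc q) j 0 := by
    intro p q
    exact TPaux.pow_add_entry P (rr p) (cc q) 0 0 T
      (fun x hx => Finset.mem_biUnion.mpr ⟨p, Finset.mem_univ p, hx⟩)
  have hmat : (Matrix.of fun p q : Fin m =>
        (fun n n' => RFMat.pow P (n + n') 0 0) (rr p) (cc q))
      = Matrix.of fun p q : Fin m =>
          ∑ j ∈ T, RFMat.pow P (rr p) 0 j * RFMat.pow P (cc q) j 0 := by
    funext p q
    exact hentry p q
  rw [hmat, TPaux.det_sum_mul]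
  apply Finset.sum_nonneg
  intro g hg
  have hgm : StrictMono g := (Finset.mem_filter.mp hg).2
  apply mul_nonneg
  · exact row_nonneg hP ((∑ p, rr p) + m) m hm rr g hrr hgm le_rfl
  · exact col_nonneg hP ((∑ q, cc q) + m) m hm g cc hgm hcc le_rfl
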